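/- arXiv:1511.08750 — 2 statements merged into one kernel-verified Lean document; each statement's English description precedes it below -/
import Mathlib

section
/- Let (X_{i,n})_{1≤i≤n} be a triangular array of random vectors with values in ℝ^k having finite absolute s-th moments for some s > 2, and define the truncated and centered variables Z_{i,n} := X_{i,n} 1_{{‖X_{i,n}‖ ≤ n}} − E[ X_{i,n} 1_{{‖X_{i,n}‖ ≤ n}} ]. Then for every n ≥ 1 and every t ∈ ℝ^k, (1/n) ∑_{i=1}^n |φ_{Z_{i,n}}(t)| ≤ (1/n) ∑_{i=1}^n |φ_{X_{i,n}}(t)| + 2 ρ_s(n) / n^s. -/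
open MeasureTheory ProbabilityTheory Filter RealInnerProductSpace

variable {Ω : Type*} [MeasureSpace Ω]

/-- The characteristic function of a random vector `X : Ω → ℝ^k`. -/
noncomputable def charFnRV {k : ℕ} (X : Ω → EuclideanSpace ℝ (Fin k))
    (t : EuclideanSpace ℝ (Fin k)) : ℂ :=
  ∫ ω, Complex.exp ((⟪t, X ω⟫ : ℝ) * Complex.I) ∂ℙ

/-- The average `ℓ`-th moment `ρ_ℓ(n)` of a triangular array. -/
noncomputable def rho {k : ℕ} (X : ℕ → ℕ → Ω → EuclideanSpace ℝ (Fin k)) (ℓ : ℝ) (n : ℕ) : ℝ :=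
  (1 / (n : ℝ)) * ∑ i ∈ Finset.range n, ∫ ω, ‖X i n ω‖ ^ ℓ ∂ℙ

/-- The truncated and centered variables
`Z_{i,n} = X_{i,n} 1_{‖X_{i,n}‖ ≤ n} - E[X_{i,n} 1_{‖X_{i,n}‖ ≤ n}]`. -/
noncomputable def truncZ {k : ℕ} (X : ℕ → ℕ → Ω → EuclideanSpace ℝ (Fin k)) (i n : ℕ)
    (ω : Ω) : EuclideanSpace ℝ (Fin k) :=
  (if ‖X i n ω‖ ≤ (n : ℝ) then X i n ω else 0) -
    ∫ ω', (if ‖X i n ω'‖ ≤ (n : ℝ) then X i n ω' else 0) ∂ℙ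

/-- Boundedness and measurability give integrability of `exp(i⟪t, f ω⟫)`. -/
lemma exp_inner_integrable [IsProbabilityMeasure (ℙ : Measure Ω)] {k : ℕ}
    {f : Ω → EuclideanSpace ℝ (Fin k)} (hf : Measurable f) (t : EuclideanSpace ℝ (Fin k)) :
    Integrable (fun ω => Complex.exp ((⟪t, f ω⟫ : ℝ) * Complex.I)) ℙ := by
  apply Integrable.mono' (integrable_const (1 : ℝ))
  · have hm : Measurable fun ω => ((⟪t, f ω⟫ : ℝ) : ℂ) * Complex.I :=
      ((Complex.measurable_ofReal.comp (measurable_const.inner hf)).mul measurable_const)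
    exact (Complex.measurable_exp.comp hm).aestronglyMeasurable
  · filter_upwards with ω
    rw [Complex.norm_exp_ofReal_mul_I]

/-- The average modulus of the characteristic functions of the truncated and centered
variables exceeds the one of the original variables by at most `2 ρ_s(n) / n^s`. -/
theorem statement16 [IsProbabilityMeasure (ℙ : Measure Ω)] {k : ℕ}
    (X : ℕ → ℕ → Ω → EuclideanSpace ℝ (Fin k))
    (hmeas : ∀ i n, Measurable (X i n))
    (s : ℝ) (hs : 2 < s)
    (hmom : ∀ i n, Integrable (fun ω => ‖X i n ω‖ ^ s) ℙ) :
    ∀ n : ℕ, 1 ≤ n → ∀ t : EuclideanSpace ℝ (Fin k),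
      (1 / (n : ℝ)) * ∑ i ∈ Finset.range n, ‖charFnRV (truncZ X i n) t‖
        ≤ (1 / (n : ℝ)) * ∑ i ∈ Finset.range n, ‖charFnRV (X i n) t‖
          + 2 * rho X s n / (n : ℝ) ^ s := by
  intro n hn t
  have hn0 : (0 : ℝ) < n := by exact_mod_cast hn
  have hs0 : (0 : ℝ) < s := by linarith
  set Y : ℕ → Ω → EuclideanSpace ℝ (Fin k) :=
    fun i ω => if ‖X i n ω‖ ≤ (n : ℝ) then X i n ω else 0 with hYdef
  have hYmeas : ∀ i, Measurable (Y i) := fun i =>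
    Measurable.ite (measurableSet_le (hmeas i n).norm measurable_const) (hmeas i n)
      measurable_const
  -- Step 1: centering does not change the modulus of the characteristic function
  have h1 : ∀ i, ‖charFnRV (truncZ X i n) t‖ = ‖charFnRV (Y i) t‖ := by
    intro i
    unfold charFnRV truncZ
    have : ∀ ω : Ω,
        Complex.exp ((⟪t, (if ‖X i n ω‖ ≤ (n : ℝ) then X i n ω else 0) -
            ∫ ω', (if ‖X i n ω'‖ ≤ (n : ℝ) then X i n ω' else 0) ∂ℙ⟫ : ℝ) * Complex.I)
          = Complex.exp ((⟪t, Y i ω⟫ : ℝ) * Complex.I) /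
            Complex.exp ((⟪t, ∫ ω', Y i ω' ∂ℙ⟫ : ℝ) * Complex.I) := by
      intro ω
      rw [inner_sub_right, ← Complex.exp_sub]
      push_cast
      ring_nf
      simp only [hYdef]
      ring_nf
    simp_rw [this]
    rw [MeasureTheory.integral_div, norm_div, Complex.norm_exp_ofReal_mul_I, div_one]
  -- Step 2: bound the difference of characteristic functions of Y and X
  have h2 : ∀ i, ‖charFnRV (Y i) t‖
      ≤ ‖charFnRV (X i n) t‖ + 2 * (∫ ω, ‖X i n ω‖ ^ s ∂ℙ) / (n : ℝ) ^ s := by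
    intro i
    have hIX := exp_inner_integrable (hmeas i n) t
    have hIY := exp_inner_integrable (hYmeas i) t
    have hbound : Integrable (fun ω => 2 * ‖X i n ω‖ ^ s / (n : ℝ) ^ s) ℙ :=
      ((hmom i n).const_mul 2).div_const _
    have hdiff : ‖charFnRV (Y i) t - charFnRV (X i n) t‖
        ≤ 2 * (∫ ω, ‖X i n ω‖ ^ s ∂ℙ) / (n : ℝ) ^ s := by
      unfold charFnRV
      rw [← integral_sub hIY hIX]
      calc ‖∫ ω, (Complex.exp ((⟪t, Y i ω⟫ : ℝ) * Complex.I)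
              - Complex.exp ((⟪t, X i n ω⟫ : ℝ) * Complex.I)) ∂ℙ‖
          ≤ ∫ ω, ‖Complex.exp ((⟪t, Y i ω⟫ : ℝ) * Complex.I)
              - Complex.exp ((⟪t, X i n ω⟫ : ℝ) * Complex.I)‖ ∂ℙ :=
            norm_integral_le_integral_norm _
        _ ≤ ∫ ω, 2 * ‖X i n ω‖ ^ s / (n : ℝ) ^ s ∂ℙ := by
            apply integral_mono (hIY.sub hIX).norm hbound
            intro ω
            simp only [Pi.sub_apply]
            by_cases hω : ‖X i n ω‖ ≤ (n : ℝ)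
            · have hYX : Y i ω = X i n ω := if_pos hω
              rw [hYX, sub_self, norm_zero]
              positivity
            · push_neg at hω
              have h2le : ‖Complex.exp ((⟪t, Y i ω⟫ : ℝ) * Complex.I)
                  - Complex.exp ((⟪t, X i n ω⟫ : ℝ) * Complex.I)‖ ≤ 2 := by
                calc _ ≤ ‖Complex.exp ((⟪t, Y i ω⟫ : ℝ) * Complex.I)‖
                      + ‖Complex.exp ((⟪t, X i n ω⟫ : ℝ) * Complex.I)‖ := norm_sub_le _ _
                  _ = 2 := by rw [Complex.norm_exp_ofReal_mul_I,
                      Complex.norm_exp_ofReal_mul_I]; norm_num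
              have hns : (0 : ℝ) < (n : ℝ) ^ s := Real.rpow_pos_of_pos hn0 s
              have hpow : (n : ℝ) ^ s ≤ ‖X i n ω‖ ^ s :=
                Real.rpow_le_rpow hn0.le hω.le hs0.le
              have : (1 : ℝ) ≤ ‖X i n ω‖ ^ s / (n : ℝ) ^ s :=
                (one_le_div hns).mpr hpow
              calc ‖Complex.exp ((⟪t, Y i ω⟫ : ℝ) * Complex.I)
                  - Complex.exp ((⟪t, X i n ω⟫ : ℝ) * Complex.I)‖ ≤ 2 := h2le
                _ ≤ 2 * (‖X i n ω‖ ^ s / (n : ℝ) ^ s) := by linarith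
                _ = 2 * ‖X i n ω‖ ^ s / (n : ℝ) ^ s := by ring
        _ = 2 * (∫ ω, ‖X i n ω‖ ^ s ∂ℙ) / (n : ℝ) ^ s := by
            simp_rw [mul_div_assoc]
            rw [MeasureTheory.integral_const_mul, MeasureTheory.integral_div]
    have := norm_sub_norm_le (charFnRV (Y i) t) (charFnRV (X i n) t)
    linarith
  -- Combine
  have key : ∀ i ∈ Finset.range n, ‖charFnRV (truncZ X i n) t‖
      ≤ ‖charFnRV (X i n) t‖ + 2 * (∫ ω, ‖X i n ω‖ ^ s ∂ℙ) / (n : ℝ) ^ s := by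
    intro i _
    rw [h1 i]; exact h2 i
  calc (1 / (n : ℝ)) * ∑ i ∈ Finset.range n, ‖charFnRV (truncZ X i n) t‖
      ≤ (1 / (n : ℝ)) * ∑ i ∈ Finset.range n,
          (‖charFnRV (X i n) t‖ + 2 * (∫ ω, ‖X i n ω‖ ^ s ∂ℙ) / (n : ℝ) ^ s) := by
        apply mul_le_mul_of_nonneg_left (Finset.sum_le_sum key) (by positivity)
    _ = (1 / (n : ℝ)) * ∑ i ∈ Finset.range n, ‖charFnRV (X i n) t‖
          + 2 * rho X s n / (n : ℝ) ^ s := by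
        rw [Finset.sum_add_distrib, mul_add, rho]
        congr 1
        simp_rw [div_eq_mul_inv]
        rw [← Finset.sum_mul, ← Finset.mul_sum]
        ring
end

section
/- Let (X_{i,n})_{1≤i≤n} be a triangular array of random vectors with values in ℝ^k having finite absolute s-th moments for some s > 2, and define Z_{i,n} := X_{i,n} 1_{{‖X_{i,n}‖ ≤ n}} − E[ X_{i,n} 1_{{‖X_{i,n}‖ ≤ n}} ]. Assume there exist constants A > 0 and R > 0 such that for all sufficiently large n and all t with ‖t‖₂ > R, (1/n) ∑_{i=1}^n |φ_{X_{i,n}}(t)| ≤ 1 − A/‖t‖₂^b, for some b>0. Then for all sufficiently large n and all t ∈ ℝ^k with ‖t‖₂ > R and ‖t‖₂^b ≤ A n^s / (4 ρ_s(n)), one has (1/n) ∑_{i=1}^n |φ_{Z_{i,n}}(t)| ≤ 1 − A/(2 ‖t‖₂^b). -/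
open MeasureTheory ProbabilityTheory Filter RealInnerProductSpace

variable {Ω : Type*} [MeasureSpace Ω]

section aux
set_option linter.unusedSectionVars false
variable [IsProbabilityMeasure (ℙ : Measure Ω)] {k : ℕ}

lemma measurable_kernel {X : Ω → EuclideanSpace ℝ (Fin k)} (hX : Measurable X)
    (t : EuclideanSpace ℝ (Fin k)) :
    Measurable fun ω => Complex.exp (((⟪t, X ω⟫ : ℝ) : ℂ) * Complex.I) := by
  have h1 : Measurable fun ω => (⟪t, X ω⟫ : ℝ) := (measurable_const.inner hX)
  exact ((Complex.measurable_ofReal.comp h1).mul_const Complex.I).cexp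

lemma integrable_kernel {X : Ω → EuclideanSpace ℝ (Fin k)} (hX : Measurable X)
    (t : EuclideanSpace ℝ (Fin k)) :
    Integrable (fun ω => Complex.exp (((⟪t, X ω⟫ : ℝ) : ℂ) * Complex.I)) ℙ := by
  refine (integrable_const (1:ℝ)).mono' (measurable_kernel hX t).aestronglyMeasurable ?_
  filter_upwards with ω
  rw [Complex.norm_exp_ofReal_mul_I]

lemma meas_trunc {X : ℕ → ℕ → Ω → EuclideanSpace ℝ (Fin k)}
    (hmeas : ∀ i n, Measurable (X i n)) (i n : ℕ) :
    Measurable fun ω => if ‖X i n ω‖ ≤ (n : ℝ) then X i n ω else 0 :=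
  Measurable.ite (measurableSet_le (hmeas i n).norm measurable_const) (hmeas i n)
    measurable_const

lemma norm_charFnRV_truncZ (X : ℕ → ℕ → Ω → EuclideanSpace ℝ (Fin k))
    (hmeas : ∀ i n, Measurable (X i n)) (i n : ℕ) (t : EuclideanSpace ℝ (Fin k)) :
    ‖charFnRV (truncZ X i n) t‖
      = ‖charFnRV (fun ω => if ‖X i n ω‖ ≤ (n : ℝ) then X i n ω else 0) t‖ := by
  set Y : Ω → EuclideanSpace ℝ (Fin k) := fun ω => if ‖X i n ω‖ ≤ (n : ℝ) then X i n ω else 0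
  set c : EuclideanSpace ℝ (Fin k) := ∫ ω', Y ω' ∂ℙ with hc
  have hZ : ∀ ω, truncZ X i n ω = Y ω - c := fun ω => rfl
  have key : ∀ ω, Complex.exp (((⟪t, truncZ X i n ω⟫ : ℝ) : ℂ) * Complex.I)
      = Complex.exp (((⟪t, Y ω⟫ : ℝ) : ℂ) * Complex.I)
        * Complex.exp (((-⟪t, c⟫ : ℝ) : ℂ) * Complex.I) := by
    intro ω
    rw [hZ, inner_sub_right, ← Complex.exp_add]
    congr 1
    push_cast
    ring
  have : charFnRV (truncZ X i n) t
      = charFnRV Y t * Complex.exp (((-⟪t, c⟫ : ℝ) : ℂ) * Complex.I) := by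
    unfold charFnRV
    simp only [key]
    exact integral_mul_const _ _
  rw [this, norm_mul, Complex.norm_exp_ofReal_mul_I,
    mul_one]

lemma charFn_trunc_bound (X : ℕ → ℕ → Ω → EuclideanSpace ℝ (Fin k))
    (hmeas : ∀ i n, Measurable (X i n)) {s : ℝ} (hs : 0 < s)
    (hmom : ∀ i n, Integrable (fun ω => ‖X i n ω‖ ^ s) ℙ)
    (i n : ℕ) (hn : 1 ≤ n) (t : EuclideanSpace ℝ (Fin k)) :
    ‖charFnRV (fun ω => if ‖X i n ω‖ ≤ (n : ℝ) then X i n ω else 0) t‖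
      ≤ ‖charFnRV (X i n) t‖ + 2 / (n : ℝ) ^ s * ∫ ω, ‖X i n ω‖ ^ s ∂ℙ := by
  set Y : Ω → EuclideanSpace ℝ (Fin k) := fun ω => if ‖X i n ω‖ ≤ (n : ℝ) then X i n ω else 0
    with hY
  have hYm : Measurable Y := meas_trunc hmeas i n
  have hnpos : (0:ℝ) < (n:ℝ) := by exact_mod_cast Nat.lt_of_lt_of_le Nat.zero_lt_one hn
  have hns : (0:ℝ) < (n:ℝ) ^ s := Real.rpow_pos_of_pos hnpos s
  have hIX := integrable_kernel (hmeas i n) t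
  have hIY := integrable_kernel hYm t
  have hdiff : ‖charFnRV Y t - charFnRV (X i n) t‖
      ≤ ∫ ω, 2 / (n : ℝ) ^ s * ‖X i n ω‖ ^ s ∂ℙ := by
    unfold charFnRV
    rw [← integral_sub hIY hIX]
    refine (norm_integral_le_integral_norm _).trans ?_
    refine integral_mono (hIY.sub hIX).norm ((hmom i n).const_mul _) ?_
    intro ω
    simp only [Pi.sub_apply]
    by_cases h : ‖X i n ω‖ ≤ (n : ℝ)
    · have : Y ω = X i n ω := if_pos h
      rw [this, sub_self, norm_zero]
      positivity
    · push_neg at h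
      have h2 : ((n:ℝ)) ^ s ≤ ‖X i n ω‖ ^ s :=
        Real.rpow_le_rpow hnpos.le h.le hs.le
      have hb2 : ‖Complex.exp (((⟪t, Y ω⟫:ℝ):ℂ) * Complex.I)
          - Complex.exp (((⟪t, X i n ω⟫:ℝ):ℂ) * Complex.I)‖ ≤ 2 := by
        refine (norm_sub_le _ _).trans ?_
        rw [Complex.norm_exp_ofReal_mul_I,
          Complex.norm_exp_ofReal_mul_I]
        norm_num
      refine hb2.trans ?_
      rw [div_mul_eq_mul_div, le_div_iff₀ hns]
      calc 2 * (n:ℝ) ^ s ≤ 2 * ‖X i n ω‖ ^ s := by nlinarith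
        _ = 2 * ‖X i n ω‖ ^ s := rfl
  calc ‖charFnRV Y t‖ ≤ ‖charFnRV (X i n) t‖ + ‖charFnRV Y t - charFnRV (X i n) t‖ := by
        have := norm_sub_norm_le (charFnRV Y t) (charFnRV (X i n) t)
        linarith [norm_sub_norm_le (charFnRV Y t) (charFnRV (X i n) t)]
    _ ≤ ‖charFnRV (X i n) t‖ + ∫ ω, 2 / (n : ℝ) ^ s * ‖X i n ω‖ ^ s ∂ℙ := by linarith
    _ = ‖charFnRV (X i n) t‖ + 2 / (n : ℝ) ^ s * ∫ ω, ‖X i n ω‖ ^ s ∂ℙ := by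
        rw [integral_const_mul]

end aux

/-- If the array satisfies an asymptotic weak Cramer bound with constants `A, R, b`, then the
truncated and centered variables satisfy, for `n` large enough and `R < ‖t‖` with
`‖t‖^b ≤ A n^s / (4 ρ_s(n))`, the bound `(1/n) ∑ |φ_{Z_{i,n}}(t)| ≤ 1 - A/(2‖t‖^b)`. -/
theorem statement17 [IsProbabilityMeasure (ℙ : Measure Ω)] {k : ℕ}
    (X : ℕ → ℕ → Ω → EuclideanSpace ℝ (Fin k))
    (hmeas : ∀ i n, Measurable (X i n))
    (s : ℝ) (hs : 2 < s)
    (hmom : ∀ i n, Integrable (fun ω => ‖X i n ω‖ ^ s) ℙ)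
    (b : ℝ) (hb : 0 < b) (A R : ℝ) (hA : 0 < A) (hR : 0 < R)
    (hcramer : ∀ᶠ n : ℕ in atTop, ∀ t : EuclideanSpace ℝ (Fin k), R < ‖t‖ →
      (1 / (n : ℝ)) * ∑ i ∈ Finset.range n, ‖charFnRV (X i n) t‖ ≤ 1 - A / ‖t‖ ^ b) :
    ∀ᶠ n : ℕ in atTop, ∀ t : EuclideanSpace ℝ (Fin k), R < ‖t‖ →
      ‖t‖ ^ b ≤ A * (n : ℝ) ^ s / (4 * rho X s n) →
      (1 / (n : ℝ)) * ∑ i ∈ Finset.range n, ‖charFnRV (truncZ X i n) t‖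
        ≤ 1 - A / (2 * ‖t‖ ^ b) := by
  filter_upwards [hcramer, eventually_ge_atTop 1] with n hcr hn1
  intro t ht htb
  have hnpos : (0:ℝ) < (n:ℝ) := by exact_mod_cast Nat.lt_of_lt_of_le Nat.zero_lt_one hn1
  have hns : (0:ℝ) < (n:ℝ) ^ s := Real.rpow_pos_of_pos hnpos s
  have htpos : 0 < ‖t‖ := hR.trans ht
  have htb_pos : 0 < ‖t‖ ^ b := Real.rpow_pos_of_pos htpos b
  have hspos : (0:ℝ) < s := by linarith
  -- termwise bound
  have hterm : ∀ i ∈ Finset.range n, ‖charFnRV (truncZ X i n) t‖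
      ≤ ‖charFnRV (X i n) t‖ + 2 / (n : ℝ) ^ s * ∫ ω, ‖X i n ω‖ ^ s ∂ℙ := by
    intro i _
    rw [norm_charFnRV_truncZ X hmeas i n t]
    exact charFn_trunc_bound X hmeas hspos hmom i n hn1 t
  have hsum : (1 / (n : ℝ)) * ∑ i ∈ Finset.range n, ‖charFnRV (truncZ X i n) t‖
      ≤ (1 / (n : ℝ)) * ∑ i ∈ Finset.range n, ‖charFnRV (X i n) t‖
        + 2 / (n : ℝ) ^ s * rho X s n := by
    have h1 : ∑ i ∈ Finset.range n, ‖charFnRV (truncZ X i n) t‖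
        ≤ ∑ i ∈ Finset.range n,
          (‖charFnRV (X i n) t‖ + 2 / (n : ℝ) ^ s * ∫ ω, ‖X i n ω‖ ^ s ∂ℙ) :=
      Finset.sum_le_sum hterm
    rw [Finset.sum_add_distrib, ← Finset.mul_sum] at h1
    have := mul_le_mul_of_nonneg_left h1 (by positivity : (0:ℝ) ≤ 1 / (n:ℝ))
    refine this.trans_eq ?_
    rw [mul_add, rho]
    ring
  have hrho_nonneg : 0 ≤ rho X s n := by
    rw [rho]
    refine mul_nonneg (by positivity) (Finset.sum_nonneg fun i _ => ?_)
    exact integral_nonneg fun ω => Real.rpow_nonneg (norm_nonneg _) s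
  have hextra : 2 / (n : ℝ) ^ s * rho X s n ≤ A / (2 * ‖t‖ ^ b) := by
    rcases eq_or_lt_of_le hrho_nonneg with hρ | hρ
    · rw [← hρ, mul_zero]
      positivity
    · have h4 : (0:ℝ) < 4 * rho X s n := by linarith
      rw [le_div_iff₀ h4] at htb
      rw [div_mul_eq_mul_div, div_le_div_iff₀ hns (by positivity)]
      nlinarith
  have hX := hcr t ht
  calc (1 / (n : ℝ)) * ∑ i ∈ Finset.range n, ‖charFnRV (truncZ X i n) t‖
      ≤ (1 / (n : ℝ)) * ∑ i ∈ Finset.range n, ‖charFnRV (X i n) t‖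
        + 2 / (n : ℝ) ^ s * rho X s n := hsum
    _ ≤ (1 - A / ‖t‖ ^ b) + A / (2 * ‖t‖ ^ b) := by linarith
    _ = 1 - A / (2 * ‖t‖ ^ b) := by
        field_simp
        ring
end
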